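/- Let G be a group and φ an automorphism of G whose only fixed point is the identity. Then the map x ↦ S_x from the generalized Alexander quandle Alex(G, φ) to the conjugation quandle of its inner automorphism group, sending x to the inner automorphism S_x(z) = φ(z x^{-1}) x, is injective. Consequently Alex(G, φ) embeds into the conjugation quandle of a group. -/
import Mathlib

private def Smap {G : Type u} [Group G] (φ : G ≃* G) (x : G) : Equiv.Perm G where
  toFun z := φ (z * x⁻¹) * x
  invFun z := φ.symm (z * x⁻¹) * x
  left_inv z := by simp
  right_inv z := by simp

private lemma Smap_inj {G : Type u} [Group G] (φ : G ≃* G)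
    (hφ : ∀ g : G, φ g = g → g = 1) :
    Function.Injective (fun x : G => (fun z : G => φ (z * x⁻¹) * x)) := by
  intro x y h
  have h1 : φ x⁻¹ * x = φ y⁻¹ * y := by
    have := congrFun h 1
    simpa using this
  have h2 : φ (y * x⁻¹) = y * x⁻¹ := by
    have h3 : φ y * (φ x⁻¹ * x) = φ y * (φ y⁻¹ * y) := by rw [h1]
    simp only [← mul_assoc, ← map_mul] at h3
    simp only [mul_inv_cancel, map_one, one_mul] at h3
    rw [map_mul, map_inv, eq_mul_inv_iff_mul_eq]
    simpa [mul_assoc] using h3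
  have := hφ _ h2
  have : y = x := by
    have := mul_inv_eq_one.mp this
    exact this
  exact this.symm

/-- If `φ` is a fixed-point free automorphism of `G`, then `x ↦ S_x`, where
`S_x z = φ(z x⁻¹) x`, is injective on the generalized Alexander quandle `Alex(G, φ)`;
consequently `Alex(G, φ)` embeds into the conjugation quandle of a group. -/
theorem alexander_quandle_embeds (G : Type u) [Group G] (φ : G ≃* G)
    (hφ : ∀ g : G, φ g = g → g = 1) :
    Function.Injective (fun x : G => (fun z : G => φ (z * x⁻¹) * x)) ∧
    ∃ (H : Type u) (_ : Group H) (f : G → H), Function.Injective f ∧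
      ∀ a b : G, f (φ (a * b⁻¹) * b) = f b * f a * (f b)⁻¹ := by
  refine ⟨Smap_inj φ hφ, Equiv.Perm G, inferInstance, Smap φ, ?_, ?_⟩
  · intro x y h
    apply Smap_inj φ hφ
    funext z
    exact DFunLike.congr_fun h z
  · intro a b
    ext z
    simp only [Smap, Equiv.Perm.mul_apply, Equiv.coe_fn_mk, Equiv.Perm.inv_def,
      Equiv.coe_fn_symm_mk]
    simp only [mul_assoc, map_mul, MulEquiv.apply_symm_apply, mul_inv_rev, map_inv,
      inv_mul_cancel_left, mul_inv_cancel_left]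
    group
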